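/- Let n and d be positive integers and let G be an (n,d)-Ramanujan graph. If S is a set of vertices of G with |S| ≥ n·d^{-1/8}, then the number of edges of the subgraph of G induced by S satisfies vol(S) ≥ δ(d)·|S|, where δ(d) = (d^{7/8} − d^{5/8})/2. -/

import Mathlib

open Finset

/-- A simple graph `G` on a finite vertex set of cardinality `n` is `(n,d)`-Ramanujan
if it is `d`-regular and every real vector `x` on the vertices whose coordinates sum
to `0` satisfies `‖Ax‖₂ ≤ 2√(d−1)·‖x‖₂`, where `A` is the adjacency matrix of `G`. -/
def IsRamanujan {V : Type*} [Fintype V] [DecidableEq V] (n d : ℕ)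
    (G : SimpleGraph V) [DecidableRel G.Adj] : Prop :=
  Fintype.card V = n ∧ G.IsRegularOfDegree d ∧
    ∀ x : V → ℝ, (∑ v, x v) = 0 →
      Real.sqrt (∑ v, ((G.adjMatrix ℝ).mulVec x v) ^ 2) ≤
        2 * Real.sqrt ((d : ℝ) - 1) * Real.sqrt (∑ v, (x v) ^ 2)

open scoped Classical in
/-- `vol G S` is the number of edges of the subgraph of `G` induced by `S`,
i.e. the number of edges of `G` with both endpoints in `S`. -/
noncomputable def vol {V : Type*} [Fintype V] [DecidableEq V]
    (G : SimpleGraph V) [DecidableRel G.Adj] (S : Finset V) : ℕ :=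
  (G.edgeFinset.filter fun e => ∀ v ∈ e, v ∈ S).card

/-- `δ(d) = (d^{7/8} − d^{5/8})/2`. -/
noncomputable def deltaOf (d : ℕ) : ℝ :=
  ((d : ℝ) ^ (7 / 8 : ℝ) - (d : ℝ) ^ (5 / 8 : ℝ)) / 2

open scoped Classical in
lemma two_mul_vol_aux {V : Type*} [Fintype V] [DecidableEq V] (G : SimpleGraph V)
    [DecidableRel G.Adj] (S : Finset V) :
    ((S ×ˢ S).filter fun p => G.Adj p.1 p.2).card = 2 * vol G S := by
  unfold vol
  rw [Finset.card_eq_sum_card_fiberwise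
    (f := fun p : V × V => s(p.1, p.2)) (t := G.edgeFinset.filter fun (e : Sym2 V) => ∀ v ∈ e, v ∈ S)
    (by
      rintro ⟨a, b⟩ hp
      simp only [Finset.mem_coe, Finset.mem_filter, Finset.mem_product] at hp
      obtain ⟨⟨ha, hb⟩, hab⟩ := hp
      simp only [Finset.mem_coe, Finset.mem_filter, SimpleGraph.mem_edgeFinset, Sym2.mem_iff]
      refine ⟨hab, ?_⟩
      rintro v (rfl | rfl) <;> assumption)]
  rw [Finset.sum_congr rfl (g := fun _ => 2), Finset.sum_const, smul_eq_mul, mul_comm]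
  intro e he
  induction e with
  | _ a b =>
    simp only [Finset.mem_filter, SimpleGraph.mem_edgeFinset, SimpleGraph.mem_edgeSet,
      Sym2.mem_iff] at he
    obtain ⟨hab, hmem⟩ := he
    have ha : a ∈ S := hmem a (Or.inl rfl)
    have hb : b ∈ S := hmem b (Or.inr rfl)
    have hne : a ≠ b := hab.ne
    have : ((S ×ˢ S).filter fun p => G.Adj p.1 p.2).filter
        (fun p => s(p.1, p.2) = s(a, b)) = {(a, b), (b, a)} := by
      ext ⟨u, v⟩
      simp only [Finset.mem_filter, Finset.mem_product, Finset.mem_insert,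
        Finset.mem_singleton, Prod.mk.injEq]
      constructor
      · rintro ⟨⟨⟨hu, hv⟩, huv⟩, he⟩
        rw [Sym2.eq_iff] at he
        rcases he with ⟨rfl, rfl⟩ | ⟨rfl, rfl⟩
        · exact Or.inl ⟨rfl, rfl⟩
        · exact Or.inr ⟨rfl, rfl⟩
      · rintro (⟨rfl, rfl⟩ | ⟨rfl, rfl⟩)
        · exact ⟨⟨⟨ha, hb⟩, hab⟩, rfl⟩
        · exact ⟨⟨⟨hb, ha⟩, hab.symm⟩, Sym2.eq_swap⟩
    rw [this, Finset.card_insert_of_notMem (by simp [hne]), Finset.card_singleton]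

set_option maxHeartbeats 1000000 in
/-- in an `(n,d)`-Ramanujan graph, every vertex set `S` with
`|S| ≥ n·d^{-1/8}` satisfies `vol(S) ≥ δ(d)·|S|`. -/
theorem ramanujan_vol_lower_bound {V : Type*} [Fintype V] [DecidableEq V]
    (n d : ℕ) (hn : 0 < n) (hd : 0 < d)
    (G : SimpleGraph V) [DecidableRel G.Adj] (hG : IsRamanujan n d G)
    (S : Finset V)
    (hS : (n : ℝ) * (d : ℝ) ^ (-(1 / 8 : ℝ)) ≤ S.card) :
    deltaOf d * S.card ≤ vol G S := by
  classical
  obtain ⟨hcard, hreg, hspec⟩ := hG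
  have hd1 : (1 : ℝ) ≤ (d : ℝ) := by exact_mod_cast hd
  have hd0 : (0 : ℝ) ≤ (d : ℝ) := by positivity
  set t : ℝ := (d : ℝ) ^ (1 / 8 : ℝ) with ht
  have ht1 : 1 ≤ t := Real.one_le_rpow hd1 (by norm_num)
  have ht0 : (0 : ℝ) < t := lt_of_lt_of_le one_pos ht1
  have hd8 : t ^ (8 : ℕ) = (d : ℝ) := by
    rw [ht, ← Real.rpow_natCast ((d : ℝ) ^ (1 / 8 : ℝ)) 8, ← Real.rpow_mul hd0]
    norm_num
  have hd7 : (d : ℝ) ^ (7 / 8 : ℝ) = t ^ (7 : ℕ) := by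
    rw [ht, ← Real.rpow_natCast ((d : ℝ) ^ (1 / 8 : ℝ)) 7, ← Real.rpow_mul hd0]
    norm_num
  have hd5 : (d : ℝ) ^ (5 / 8 : ℝ) = t ^ (5 : ℕ) := by
    rw [ht, ← Real.rpow_natCast ((d : ℝ) ^ (1 / 8 : ℝ)) 5, ← Real.rpow_mul hd0]
    norm_num
  have hdneg : (d : ℝ) ^ (-(1 / 8 : ℝ)) = 1 / t := by
    rw [Real.rpow_neg hd0, ht]
    exact (one_div _).symm
  set nn : ℝ := (n : ℝ) with hnn_def
  have hnn : (0 : ℝ) < nn := by rw [hnn_def]; exact_mod_cast hn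
  set s : ℝ := (S.card : ℝ) with hs_def
  have hs_pos : (0 : ℝ) < s := by
    refine lt_of_lt_of_le ?_ hS
    have : (0 : ℝ) < (d : ℝ) ^ (-(1 / 8 : ℝ)) := Real.rpow_pos_of_pos (by linarith) _
    positivity
  have hsn : s ≤ nn := by
    rw [hs_def, hnn_def, ← hcard]
    exact_mod_cast S.card_le_univ
  set c : ℝ := s / nn with hc
  have hc1 : c ≤ 1 := (div_le_one hnn).mpr hsn
  have hnc : nn * c = s := by rw [hc]; field_simp
  have htc : 1 ≤ t * c := by
    rw [hdneg] at hS
    rw [hc, mul_div_assoc', le_div_iff₀ hnn, one_mul]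
    calc nn = nn * (1 / t) * t := by field_simp
      _ ≤ s * t := mul_le_mul_of_nonneg_right hS ht0.le
      _ = t * s := mul_comm _ _
  set f : V → ℝ := fun v => if v ∈ S then 1 else 0 with hf
  set x : V → ℝ := fun v => f v - c with hx
  have hind : ∑ v : V, f v = s := by
    simp [hf, hs_def, Finset.sum_boole, Finset.filter_mem_eq_inter]
  have hxsum : ∑ v, x v = 0 := by
    simp only [hx, Finset.sum_sub_distrib, hind, Finset.sum_const, Finset.card_univ, hcard,
      nsmul_eq_mul, ← hnn_def]
    rw [hnc]; ring
  -- the column sums of the adjacency matrix are all `d`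
  have hcol : ∀ u : V, ∑ v : V, (if G.Adj v u then (1 : ℝ) else 0) = d := by
    intro u
    rw [Finset.sum_boole]
    have : (univ.filter fun v => G.Adj v u) = G.neighborFinset u := by
      ext v; simp [SimpleGraph.mem_neighborFinset, G.adj_comm]
    rw [this, SimpleGraph.card_neighborFinset_eq_degree, hreg u]
  have hnbhd : ∀ v : V, ∑ u ∈ G.neighborFinset v, f u
      = ∑ u ∈ S, (if G.Adj v u then (1 : ℝ) else 0) := by
    intro v
    rw [SimpleGraph.neighborFinset_eq_filter, Finset.sum_filter]
    rw [show (∑ u ∈ S, (if G.Adj v u then (1 : ℝ) else 0))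
        = ∑ u ∈ univ ∩ S, (if G.Adj v u then (1 : ℝ) else 0) by rw [Finset.univ_inter],
      ← Finset.sum_ite_mem]
    refine Finset.sum_congr rfl fun u _ => ?_
    by_cases h1 : G.Adj v u <;> by_cases h2 : u ∈ S <;> simp [hf, h1, h2]
  -- sum of `A f` over all vertices
  have hAf_sum : ∑ v : V, (∑ u ∈ G.neighborFinset v, f u) = d * s := by
    calc ∑ v : V, (∑ u ∈ G.neighborFinset v, f u)
        = ∑ v : V, ∑ u : V, (if G.Adj v u then f u else 0) := by
          refine Finset.sum_congr rfl fun v _ => ?_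
          rw [SimpleGraph.neighborFinset_eq_filter, Finset.sum_filter]
      _ = ∑ u : V, ∑ v : V, (if G.Adj v u then f u else 0) := Finset.sum_comm
      _ = ∑ u : V, f u * ∑ v : V, (if G.Adj v u then (1 : ℝ) else 0) := by
          refine Finset.sum_congr rfl fun u _ => ?_
          rw [Finset.mul_sum]
          refine Finset.sum_congr rfl fun v _ => ?_
          split <;> simp
      _ = ∑ u : V, f u * d := by
          refine Finset.sum_congr rfl fun u _ => ?_
          rw [hcol u]
      _ = d * s := by rw [← Finset.sum_mul, hind, mul_comm]
  -- sum of `f ⬝ A f` equals twice the volume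
  have hE : ∑ v : V, f v * (∑ u ∈ G.neighborFinset v, f u) = 2 * (vol G S : ℝ) := by
    have huniv : univ.filter (fun v => v ∈ S) = S := by ext v; simp
    calc ∑ v : V, f v * (∑ u ∈ G.neighborFinset v, f u)
        = ∑ v : V, (if v ∈ S then (∑ u ∈ G.neighborFinset v, f u) else 0) := by
          refine Finset.sum_congr rfl fun v _ => ?_
          by_cases h : v ∈ S <;> simp [hf, h]
      _ = ∑ v ∈ S, (∑ u ∈ G.neighborFinset v, f u) := by
          rw [← Finset.sum_filter, huniv]
      _ = ∑ v ∈ S, ∑ u ∈ S, (if G.Adj v u then (1 : ℝ) else 0) := by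
          exact Finset.sum_congr rfl fun v _ => hnbhd v
      _ = ∑ p ∈ S ×ˢ S, (if G.Adj p.1 p.2 then (1 : ℝ) else 0) := by
          rw [Finset.sum_product]
      _ = (((S ×ˢ S).filter fun p => G.Adj p.1 p.2).card : ℝ) := by
          rw [Finset.sum_boole]
      _ = 2 * (vol G S : ℝ) := by rw [two_mul_vol_aux]; push_cast; ring
  -- computing `A x`
  have hAx : ∀ v, (G.adjMatrix ℝ).mulVec x v = (∑ u ∈ G.neighborFinset v, f u) - d * c := by
    intro v
    rw [SimpleGraph.adjMatrix_mulVec_apply]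
    simp only [hx]
    rw [Finset.sum_sub_distrib, Finset.sum_const, SimpleGraph.card_neighborFinset_eq_degree,
      hreg v, nsmul_eq_mul]
  -- the quadratic form
  have hQ : ∑ v, x v * ((G.adjMatrix ℝ).mulVec x v) = 2 * (vol G S : ℝ) - d * c * s := by
    have step : ∑ v, x v * ((G.adjMatrix ℝ).mulVec x v)
        = (∑ v : V, f v * (∑ u ∈ G.neighborFinset v, f u))
          - (∑ v : V, f v) * (d * c)
          - c * (∑ v : V, (∑ u ∈ G.neighborFinset v, f u))
          + nn * (c * (d * c)) := by
      calc ∑ v, x v * ((G.adjMatrix ℝ).mulVec x v)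
          = ∑ v : V, (f v * (∑ u ∈ G.neighborFinset v, f u) - f v * (d * c)
              - c * (∑ u ∈ G.neighborFinset v, f u) + c * (d * c)) := by
            refine Finset.sum_congr rfl fun v _ => ?_
            rw [hAx v]; simp only [hx]; ring
        _ = _ := by
            rw [Finset.sum_add_distrib, Finset.sum_sub_distrib, Finset.sum_sub_distrib,
              Finset.sum_const, Finset.card_univ, hcard, nsmul_eq_mul, ← Finset.sum_mul,
              ← Finset.mul_sum, ← hnn_def]
    rw [step, hE, hind, hAf_sum]
    linear_combination (d * c) * hnc
  -- norm of x
  have hx2 : ∑ v, (x v) ^ 2 = s - c * s := by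
    have expand : ∀ v : V, (x v) ^ 2 = f v - 2 * c * f v + c ^ 2 := by
      intro v
      simp only [hx, hf]
      by_cases h : v ∈ S <;> simp [h] <;> ring
    calc ∑ v, (x v) ^ 2 = ∑ v : V, (f v - 2 * c * f v + c ^ 2) :=
          Finset.sum_congr rfl fun v _ => expand v
      _ = (∑ v : V, f v) - 2 * c * (∑ v : V, f v) + nn * c ^ 2 := by
          rw [Finset.sum_add_distrib, Finset.sum_sub_distrib, ← Finset.mul_sum,
            Finset.sum_const, Finset.card_univ, hcard, nsmul_eq_mul, ← hnn_def]
      _ = s - c * s := by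
          rw [hind]
          have : nn * c ^ 2 = c * s := by rw [pow_two, ← mul_assoc, hnc, mul_comm]
          rw [this]; ring
  have hB : (0 : ℝ) ≤ ∑ v, (x v) ^ 2 := Finset.sum_nonneg fun v _ => sq_nonneg _
  set r : ℝ := Real.sqrt ((d : ℝ) - 1) with hr
  have hr0 : 0 ≤ r := Real.sqrt_nonneg _
  have hr4 : r ≤ t ^ 4 := by
    have h1 : ((t ^ 4 : ℝ)) ^ 2 = (d : ℝ) := by rw [← hd8]; ring
    have h2 : Real.sqrt (d : ℝ) = t ^ 4 := by
      rw [← h1, Real.sqrt_sq (by positivity)]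
    rw [hr, ← h2]
    exact Real.sqrt_le_sqrt (by linarith)
  -- Cauchy–Schwarz + the spectral bound
  have hcs : (∑ v, x v * ((G.adjMatrix ℝ).mulVec x v)) ^ 2
      ≤ (∑ v, (x v) ^ 2) * (∑ v, ((G.adjMatrix ℝ).mulVec x v) ^ 2) :=
    Finset.sum_mul_sq_le_sq_mul_sq univ x ((G.adjMatrix ℝ).mulVec x)
  have hspec' := hspec x hxsum
  have habs : |∑ v, x v * ((G.adjMatrix ℝ).mulVec x v)|
      ≤ 2 * r * (∑ v, (x v) ^ 2) := by
    have h1 : |∑ v, x v * ((G.adjMatrix ℝ).mulVec x v)|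
        ≤ Real.sqrt (∑ v, (x v) ^ 2) * Real.sqrt (∑ v, ((G.adjMatrix ℝ).mulVec x v) ^ 2) := by
      rw [← Real.sqrt_sq_eq_abs, ← Real.sqrt_mul hB]
      exact Real.sqrt_le_sqrt hcs
    calc |∑ v, x v * ((G.adjMatrix ℝ).mulVec x v)|
        ≤ Real.sqrt (∑ v, (x v) ^ 2) * Real.sqrt (∑ v, ((G.adjMatrix ℝ).mulVec x v) ^ 2) := h1
      _ ≤ Real.sqrt (∑ v, (x v) ^ 2) * (2 * r * Real.sqrt (∑ v, (x v) ^ 2)) :=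
          mul_le_mul_of_nonneg_left hspec' (Real.sqrt_nonneg _)
      _ = 2 * r * (Real.sqrt (∑ v, (x v) ^ 2) * Real.sqrt (∑ v, (x v) ^ 2)) := by ring
      _ = 2 * r * (∑ v, (x v) ^ 2) := by rw [Real.mul_self_sqrt hB]
  have hQge : -(2 * r * (s - c * s)) ≤ ∑ v, x v * ((G.adjMatrix ℝ).mulVec x v) := by
    have := neg_abs_le (∑ v, x v * ((G.adjMatrix ℝ).mulVec x v))
    rw [hx2] at habs
    linarith
  -- the key scalar inequality
  have hkey : (t ^ (7 : ℕ) : ℝ) - t ^ (5 : ℕ) ≤ (d : ℝ) * c - 2 * r * (1 - c) := by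
    have h1 : (0 : ℝ) ≤ (t * c - 1) * (t ^ 8 + 2 * r) :=
      mul_nonneg (by linarith) (by positivity)
    have h2 : (0 : ℝ) ≤ (t ^ 4 - r) * (t - 1) :=
      mul_nonneg (by linarith) (by linarith)
    have hid : t * (t ^ 8 * c - 2 * r * (1 - c) - (t ^ 7 - t ^ 5))
        = (t * c - 1) * (t ^ 8 + 2 * r) + 2 * ((t ^ 4 - r) * (t - 1))
          + t ^ 4 * (t - 1) ^ 2 + t ^ 4 := by ring
    have hmul : (0 : ℝ) ≤ t * (t ^ 8 * c - 2 * r * (1 - c) - (t ^ 7 - t ^ 5)) := by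
      rw [hid]
      have h3 : (0 : ℝ) ≤ t ^ 4 * (t - 1) ^ 2 :=
        mul_nonneg (pow_nonneg ht0.le 4) (sq_nonneg _)
      have h4 : (0 : ℝ) ≤ t ^ 4 := pow_nonneg ht0.le 4
      linarith
    have h5 : (0 : ℝ) ≤ t ^ 8 * c - 2 * r * (1 - c) - (t ^ 7 - t ^ 5) :=
      nonneg_of_mul_nonneg_right hmul ht0
    rw [← hd8]
    linarith
  -- conclude
  have hfin : ((d : ℝ) ^ (7 / 8 : ℝ) - (d : ℝ) ^ (5 / 8 : ℝ)) * s ≤ 2 * (vol G S : ℝ) := by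
    rw [hd7, hd5]
    have hk := mul_le_mul_of_nonneg_right hkey hs_pos.le
    linarith [hQ, hQge, hk]
  rw [deltaOf]
  linarith
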